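/- For all positive real parameters κ, θ, σ, the function x ↦ x·π(x) is integrable on [0,∞) and ∫₀^∞ x · π(x) dx = θ + (σ/√(2κ)) · φ(√(2κ)θ/σ) / (1 − Φ(−√(2κ)θ/σ)). -/

import Mathlib

open MeasureTheory Real

/-- The standard normal probability density function φ. -/
noncomputable def stdPhi (x : ℝ) : ℝ := Real.exp (-x ^ 2 / 2) / Real.sqrt (2 * Real.pi)

/-- The standard normal cumulative distribution function Φ. -/
noncomputable def stdCDF (x : ℝ) : ℝ := ∫ u in Set.Iic x, stdPhi u

/-- The stationary density of the reflected Ornstein–Uhlenbeck process. -/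
noncomputable def rouPi (κ θ σ x : ℝ) : ℝ :=
  (Real.sqrt (2 * κ) / σ) * stdPhi (Real.sqrt (2 * κ) * (x - θ) / σ) /
    (1 - stdCDF (-(Real.sqrt (2 * κ) * θ / σ)))

lemma stdPhi_pos (x : ℝ) : 0 < stdPhi x :=
  div_pos (Real.exp_pos _) (Real.sqrt_pos.2 (by positivity))

lemma stdPhi_neg (x : ℝ) : stdPhi (-x) = stdPhi x := by
  simp [stdPhi]

lemma continuous_stdPhi : Continuous stdPhi := by
  unfold stdPhi; fun_prop

lemma integrable_stdPhi : MeasureTheory.Integrable stdPhi := by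
  have h : stdPhi = fun x => Real.exp (-(1/2 : ℝ) * x ^ 2) / Real.sqrt (2 * Real.pi) := by
    funext x; rw [stdPhi]; ring_nf
  rw [h]
  exact (integrable_exp_neg_mul_sq (by norm_num : (0:ℝ) < 1/2)).div_const _

lemma integral_stdPhi : (∫ x, stdPhi x) = 1 := by
  have h : stdPhi = fun x => Real.exp (-(1/2 : ℝ) * x ^ 2) / Real.sqrt (2 * Real.pi) := by
    funext x; rw [stdPhi]; ring_nf
  rw [h, MeasureTheory.integral_div, integral_gaussian]
  rw [div_eq_one_iff_eq (by positivity)]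
  rw [show Real.pi / (1/2 : ℝ) = 2 * Real.pi by ring]

lemma hasDerivAt_stdPhi (x : ℝ) : HasDerivAt stdPhi (-x * stdPhi x) x := by
  have h1 : HasDerivAt (fun y : ℝ => -y ^ 2 / 2) (-x) x := by
    have := ((hasDerivAt_pow 2 x).neg).div_const 2
    exact this.congr_deriv (by norm_num; ring)
  have h2 := (h1.exp).div_const (Real.sqrt (2 * Real.pi))
  exact h2.congr_deriv (by unfold stdPhi; ring)

lemma stdCDF_eq (t : ℝ) : stdCDF t = stdCDF 0 + ∫ u in (0:ℝ)..t, stdPhi u := by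
  rw [stdCDF, stdCDF, ← intervalIntegral.integral_Iic_sub_Iic
    integrable_stdPhi.integrableOn integrable_stdPhi.integrableOn]
  ring

lemma hasDerivAt_stdCDF (x : ℝ) : HasDerivAt stdCDF (stdPhi x) x := by
  have h : HasDerivAt (fun t => ∫ u in (0:ℝ)..t, stdPhi u) (stdPhi x) x :=
    intervalIntegral.integral_hasDerivAt_right
      integrable_stdPhi.intervalIntegrable
      continuous_stdPhi.stronglyMeasurable.stronglyMeasurableAtFilter
      continuous_stdPhi.continuousAt
  have := (hasDerivAt_const x (stdCDF 0)).add h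
  have e : stdCDF = (fun x => stdCDF 0) + fun t => ∫ u in (0:ℝ)..t, stdPhi u := funext stdCDF_eq
  rw [e]; exact this.congr_deriv (zero_add _)

lemma tendsto_stdCDF_atTop : Filter.Tendsto stdCDF Filter.atTop (nhds 1) := by
  have h := MeasureTheory.tendsto_setIntegral_of_monotone (μ := volume) (f := stdPhi)
    (s := fun t : ℝ => Set.Iic t) (fun t => measurableSet_Iic)
    (fun a b hab => Set.Iic_subset_Iic.2 hab)
    (by rw [Set.iUnion_Iic]; exact integrable_stdPhi.integrableOn)
  rw [Set.iUnion_Iic, MeasureTheory.setIntegral_univ, integral_stdPhi] at h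
  exact h

lemma tendsto_stdPhi_atTop : Filter.Tendsto stdPhi Filter.atTop (nhds 0) := by
  have h : Filter.Tendsto (fun x : ℝ => Real.exp (-x ^ 2 / 2)) Filter.atTop (nhds 0) := by
    apply Real.tendsto_exp_atBot.comp
    apply Filter.Tendsto.atBot_div_const (by norm_num : (0:ℝ) < 2)
    exact Filter.tendsto_neg_atBot_iff.2 (Filter.tendsto_pow_atTop (by norm_num))
  have := h.div_const (Real.sqrt (2 * Real.pi))
  rw [zero_div] at this; exact this

lemma stdCDF_lt_one (x : ℝ) : stdCDF x < 1 := by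
  have hsplit : stdCDF x + ∫ u in Set.Ioi x, stdPhi u = 1 := by
    rw [stdCDF, intervalIntegral.integral_Iic_add_Ioi
      integrable_stdPhi.integrableOn integrable_stdPhi.integrableOn, integral_stdPhi]
  have hpos : 0 < ∫ u in Set.Ioi x, stdPhi u := by
    rw [MeasureTheory.setIntegral_pos_iff_support_of_nonneg_ae
      (Filter.Eventually.of_forall fun u => (stdPhi_pos u).le) integrable_stdPhi.integrableOn]
    have : Function.support stdPhi = Set.univ := by
      ext u; simp [Function.support, (stdPhi_pos u).ne']
    rw [this, Set.univ_inter]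
    simp [Real.volume_Ioi]
  linarith

/-- For all positive parameters κ, θ, σ, the first stationary moment:
x ↦ x·π(x) is integrable on [0,∞) and
∫₀^∞ x π(x) dx = θ + (σ/√(2κ)) φ(√(2κ)θ/σ)/(1 − Φ(−√(2κ)θ/σ)). -/
theorem rouPi_first_moment (κ θ σ : ℝ) (hκ : 0 < κ) (hθ : 0 < θ) (hσ : 0 < σ) :
    MeasureTheory.IntegrableOn (fun x : ℝ => x * rouPi κ θ σ x) (Set.Ioi 0) ∧
      (∫ x in Set.Ioi (0 : ℝ), x * rouPi κ θ σ x) =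
        θ + (σ / Real.sqrt (2 * κ)) * stdPhi (Real.sqrt (2 * κ) * θ / σ) /
          (1 - stdCDF (-(Real.sqrt (2 * κ) * θ / σ))) := by
  set b := Real.sqrt (2 * κ) with hb
  have hbpos : 0 < b := Real.sqrt_pos.2 (by positivity)
  set a := b / σ with ha
  have hapos : 0 < a := div_pos hbpos hσ
  set C := 1 - stdCDF (-(b * θ / σ)) with hC
  have hCpos : 0 < C := by
    have := stdCDF_lt_one (-(b * θ / σ)); simp only [hC]; linarith
  -- rewrite rouPi
  have harg : ∀ x : ℝ, b * (x - θ) / σ = a * (x - θ) := fun x => by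
    rw [ha]; ring
  have hargθ : b * θ / σ = a * θ := by rw [ha]; ring
  have hrou : ∀ x : ℝ, x * rouPi κ θ σ x = (x * (a * stdPhi (a * (x - θ)))) / C := by
    intro x
    rw [rouPi, ← hb, ← hC, harg, ← ha]
    ring
  -- antiderivative
  set g : ℝ → ℝ := fun x => θ * stdCDF (a * (x - θ)) - (1 / a) * stdPhi (a * (x - θ)) with hg
  have hderiv : ∀ x : ℝ, HasDerivAt g (x * (a * stdPhi (a * (x - θ)))) x := by
    intro x
    have hlin : HasDerivAt (fun y : ℝ => a * (y - θ)) a x := by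
      simpa using ((hasDerivAt_id x).sub_const θ).const_mul a
    have h1 : HasDerivAt (fun y => θ * stdCDF (a * (y - θ)))
        (θ * (stdPhi (a * (x - θ)) * a)) x :=
      by have := (((hasDerivAt_stdCDF (a * (x - θ))).comp x hlin)).const_mul θ; exact this
    have h2 : HasDerivAt (fun y => (1 / a) * stdPhi (a * (y - θ)))
        ((1 / a) * ((-(a * (x - θ)) * stdPhi (a * (x - θ))) * a)) x :=
      (((hasDerivAt_stdPhi (a * (x - θ))).comp x hlin)).const_mul (1 / a)
    have := h1.sub h2
    refine this.congr_deriv ?_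
    field_simp
    ring
  have hpos : ∀ x ∈ Set.Ioi (0:ℝ), 0 ≤ x * (a * stdPhi (a * (x - θ))) := by
    intro x hx
    have hx' : (0:ℝ) < x := hx
    have := stdPhi_pos (a * (x - θ))
    positivity
  have hlinTop : Filter.Tendsto (fun x : ℝ => a * (x - θ)) Filter.atTop Filter.atTop := by
    apply Filter.Tendsto.const_mul_atTop hapos
    exact Filter.tendsto_atTop_add_const_right _ (-θ) Filter.tendsto_id
  have htends : Filter.Tendsto g Filter.atTop (nhds θ) := by
    have h1 := (tendsto_stdCDF_atTop.comp hlinTop).const_mul θ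
    have h2 := (tendsto_stdPhi_atTop.comp hlinTop).const_mul (1 / a)
    have := h1.sub h2
    simpa [hg, Function.comp] using this
  have hint : MeasureTheory.IntegrableOn
      (fun x : ℝ => x * (a * stdPhi (a * (x - θ)))) (Set.Ioi 0) :=
    integrableOn_Ioi_deriv_of_nonneg' (fun x _ => hderiv x) hpos htends
  have hval : (∫ x in Set.Ioi (0:ℝ), x * (a * stdPhi (a * (x - θ)))) = θ - g 0 :=
    integral_Ioi_of_hasDerivAt_of_nonneg' (fun x _ => hderiv x) hpos htends
  have hg0 : g 0 = θ * stdCDF (-(a * θ)) - (1 / a) * stdPhi (a * θ) := by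
    have h0 : g 0 = θ * stdCDF (a * ((0:ℝ) - θ)) - (1 / a) * stdPhi (a * ((0:ℝ) - θ)) := rfl
    rw [h0, show a * ((0:ℝ) - θ) = -(a * θ) by ring, stdPhi_neg]
  constructor
  · have : (fun x : ℝ => x * rouPi κ θ σ x)
        = fun x => (x * (a * stdPhi (a * (x - θ)))) / C := funext hrou
    rw [this]
    exact hint.div_const C
  · calc (∫ x in Set.Ioi (0:ℝ), x * rouPi κ θ σ x)
        = ∫ x in Set.Ioi (0:ℝ), (x * (a * stdPhi (a * (x - θ)))) / C := by
          exact MeasureTheory.setIntegral_congr_fun measurableSet_Ioi fun x _ => hrou x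
      _ = (∫ x in Set.Ioi (0:ℝ), x * (a * stdPhi (a * (x - θ)))) / C :=
          MeasureTheory.integral_div C _
      _ = (θ - g 0) / C := by rw [hval]
      _ = θ + (σ / b) * stdPhi (b * θ / σ) / C := by
          rw [hg0, hargθ]
          have hCeq : stdCDF (-(a * θ)) = 1 - C := by
            rw [hC, hargθ]; ring
          rw [hCeq]
          have hσb : σ / b = 1 / a := by
            rw [ha]; field_simp
          rw [hσb]
          field_simp
          ring
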